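/- Suppose that for every pair of elements x, y ∈ G the commutator [x,y] has finite order. Then the subgroup L₁₂ = ⁅L₁,L₂⁆ of the weak commutativity group χ(G) is periodic (every element has finite order). -/

import Mathlib

open Subgroup
open scoped commutatorElement

/-- The weak commutativity relations inside the free product `G ∗ G`. -/
def chiRel (G : Type*) [Group G] : Subgroup (Monoid.Coprod G G) :=
  Subgroup.normalClosure
    {x | ∃ g : G, x = Monoid.Coprod.inl g * Monoid.Coprod.inr g *
      (Monoid.Coprod.inl g)⁻¹ * (Monoid.Coprod.inr g)⁻¹}

instance chiRel_normal (G : Type*) [Group G] : (chiRel G).Normal :=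
  Subgroup.normalClosure_normal

/-- The weak commutativity group `χ(G)`. -/
def Chi (G : Type*) [Group G] : Type _ := Monoid.Coprod G G ⧸ chiRel G

instance (G : Type*) [Group G] : Group (Chi G) :=
  inferInstanceAs (Group (Monoid.Coprod G G ⧸ chiRel G))

/-- The canonical map `G → χ(G)`, `g ↦ g`. -/
def chiIota1 (G : Type*) [Group G] : G →* Chi G :=
  (QuotientGroup.mk' (chiRel G)).comp Monoid.Coprod.inl

/-- The canonical map `G → χ(G)`, `g ↦ g^φ`. -/
def chiIota2 (G : Type*) [Group G] : G →* Chi G :=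
  (QuotientGroup.mk' (chiRel G)).comp Monoid.Coprod.inr

/-- `G₁ ≤ χ(G)`. -/
def chiG1 (G : Type*) [Group G] : Subgroup (Chi G) := (chiIota1 G).range

/-- `G₂ = G^φ ≤ χ(G)`. -/
def chiG2 (G : Type*) [Group G] : Subgroup (Chi G) := (chiIota2 G).range

/-- `L = ⟨g⁻¹ g^φ : g ∈ G⟩`. -/
def chiL (G : Type*) [Group G] : Subgroup (Chi G) :=
  Subgroup.closure {x | ∃ g : G, x = (chiIota1 G g)⁻¹ * chiIota2 G g}

/-- `D = ⁅G₁, G₂⁆`. -/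
def chiD (G : Type*) [Group G] : Subgroup (Chi G) := ⁅chiG1 G, chiG2 G⁆

/-- `L₁ = ⁅L, G₁⁆`. -/
def chiL1 (G : Type*) [Group G] : Subgroup (Chi G) := ⁅chiL G, chiG1 G⁆

/-- `L₂ = ⁅L, G₂⁆`. -/
def chiL2 (G : Type*) [Group G] : Subgroup (Chi G) := ⁅chiL G, chiG2 G⁆

/-- `R = ⁅⁅G₁, L⁆, G₂⁆`. -/
def chiR (G : Type*) [Group G] : Subgroup (Chi G) := ⁅⁅chiG1 G, chiL G⁆, chiG2 G⁆

/-- `L₁₂ = ⁅L₁, L₂⁆`. -/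
def chiL12 (G : Type*) [Group G] : Subgroup (Chi G) := ⁅chiL1 G, chiL2 G⁆

namespace ChiAux

variable (G : Type*) [Group G]

/-- The generators `g⁻¹ g^φ` of `L`. -/
def uu (g : G) : Chi G := (chiIota1 G g)⁻¹ * chiIota2 G g

variable {G}

lemma uu_mem (g : G) : uu G g ∈ chiL G := Subgroup.subset_closure ⟨g, rfl⟩

/-- The defining relation: `g` and `g^φ` commute in `χ(G)`. -/
lemma rel_comm (g : G) : chiIota1 G g * chiIota2 G g = chiIota2 G g * chiIota1 G g := by
  have h : (Monoid.Coprod.inl g * Monoid.Coprod.inr g * (Monoid.Coprod.inl g)⁻¹ *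
      (Monoid.Coprod.inr g)⁻¹ : Monoid.Coprod G G) ∈ chiRel G :=
    Subgroup.subset_normalClosure ⟨g, rfl⟩
  have h2 : ((Monoid.Coprod.inl g * Monoid.Coprod.inr g * (Monoid.Coprod.inl g)⁻¹ *
      (Monoid.Coprod.inr g)⁻¹ : Monoid.Coprod G G) : Monoid.Coprod G G ⧸ chiRel G) = 1 :=
    (QuotientGroup.eq_one_iff _).mpr h
  have h3 : chiIota1 G g * chiIota2 G g * (chiIota1 G g)⁻¹ * (chiIota2 G g)⁻¹ = 1 := by
    exact h2
  rw [mul_inv_eq_one, mul_inv_eq_iff_eq_mul] at h3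
  exact h3

/-- Sidki's swap lemma, inverse form. -/
lemma swap' (x y : G) :
    (chiIota1 G x)⁻¹ * (chiIota2 G y * (chiIota1 G x * (chiIota2 G y)⁻¹)) =
    (chiIota2 G x)⁻¹ * (chiIota1 G y * (chiIota2 G x * (chiIota1 G y)⁻¹)) := by
  set A := chiIota1 G x with hA
  set C := chiIota2 G x with hC
  set B := chiIota1 G y with hB
  set D := chiIota2 G y with hD
  have h1 : A * C = C * A := rel_comm x
  have h2 : B * D = D * B := rel_comm y
  have h3 : A * (B * (C * D)) = C * (D * (A * B)) := by
    have h := rel_comm (x * y)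
    rw [map_mul, map_mul] at h
    simpa [mul_assoc] using h
  have h1c : A⁻¹ * C = C * A⁻¹ := by
    have := congrArg (fun t => A⁻¹ * t * A⁻¹) h1
    simpa [mul_assoc] using this.symm
  have h2c : B * D⁻¹ = D⁻¹ * B := by
    have := congrArg (fun t => D⁻¹ * t * D⁻¹) h2
    simpa [mul_assoc] using this.symm
  have e1 : B * (C * D) = A⁻¹ * (C * (D * (A * B))) := by
    have := congrArg (fun t => A⁻¹ * t) h3
    simpa [mul_assoc] using this
  have e2 : B * (C * D) = C * (A⁻¹ * (D * (A * B))) := by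
    rw [e1, ← mul_assoc, h1c, mul_assoc]
  have e3 : C⁻¹ * (B * (C * D)) = A⁻¹ * (D * (A * B)) := by
    have := congrArg (fun t => C⁻¹ * t) e2
    simpa [mul_assoc] using this
  have e4 : C⁻¹ * (B * C) = A⁻¹ * (D * (A * (B * D⁻¹))) := by
    have := congrArg (fun t => t * D⁻¹) e3
    simpa [mul_assoc] using this
  have e5 : C⁻¹ * (B * C) = A⁻¹ * (D * (A * (D⁻¹ * B))) := by rw [e4, h2c]
  have e6 := congrArg (fun t => t * B⁻¹) e5
  simpa [mul_assoc] using e6.symm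

/-- Sidki's swap lemma: `⁅g, h^φ⁆ = ⁅g^φ, h⁆`. -/
lemma swap (x y : G) : ⁅chiIota1 G x, chiIota2 G y⁆ = ⁅chiIota2 G x, chiIota1 G y⁆ := by
  have h := swap' x⁻¹ y
  simp only [map_inv, inv_inv] at h
  have g1 : ⁅chiIota1 G x, chiIota2 G y⁆ =
      chiIota1 G x * (chiIota2 G y * ((chiIota1 G x)⁻¹ * (chiIota2 G y)⁻¹)) := by group
  have g2 : ⁅chiIota2 G x, chiIota1 G y⁆ =
      chiIota2 G x * (chiIota1 G y * ((chiIota2 G x)⁻¹ * (chiIota1 G y)⁻¹)) := by group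
  rw [g1, g2]
  exact h

lemma comm_mul (a b c : Chi G) : ⁅a * b, c⁆ = a * ⁅b, c⁆ * a⁻¹ * ⁅a, c⁆ := by
  simp [commutatorElement_def, mul_assoc]

/-- Conjugation by `z` and by `z^φ` agree on the generators of `D`. -/
lemma conj_eq (x y z : G) :
    chiIota1 G z * ⁅chiIota1 G x, chiIota2 G y⁆ * (chiIota1 G z)⁻¹ =
    chiIota2 G z * ⁅chiIota1 G x, chiIota2 G y⁆ * (chiIota2 G z)⁻¹ := by
  have h := swap (z * x) y
  rw [map_mul, map_mul, comm_mul, comm_mul, ← swap x y, ← swap z y] at h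
  exact mul_right_cancel h

/-- Sidki's lemma `⁅D, L⁆ = 1` on generators: every generator of `D` commutes with every
generator of `L`. -/
lemma dgen_comm_u (x y z : G) : Commute ⁅chiIota1 G x, chiIota2 G y⁆ (uu G z) := by
  have k2 := conj_eq x y z
  have := congrArg (fun t => (chiIota1 G z)⁻¹ * (t * chiIota2 G z)) k2
  show ⁅chiIota1 G x, chiIota2 G y⁆ * uu G z = uu G z * ⁅chiIota1 G x, chiIota2 G y⁆
  simp only [uu]
  simpa [mul_assoc] using this


variable (G)

/-- The normal closure of `D`. -/
def NN : Subgroup (Chi G) := Subgroup.normalClosure (chiD G : Set (Chi G))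

instance : (NN G).Normal := Subgroup.normalClosure_normal

variable {G}

lemma uu_conj_i (x y : G) :
    (chiIota1 G y)⁻¹ * uu G x * chiIota1 G y = uu G (x * y) * (uu G y)⁻¹ := by
  simp only [uu, map_mul, mul_inv_rev]
  group

lemma uu_conj_j (x y : G) :
    (chiIota2 G y)⁻¹ * uu G x * chiIota2 G y = (uu G y)⁻¹ * uu G (x * y) := by
  simp only [uu, map_mul, mul_inv_rev]
  group

lemma conjL_i (y : G) {h : Chi G} (hh : h ∈ chiL G) :
    (chiIota1 G y)⁻¹ * h * chiIota1 G y ∈ chiL G := by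
  induction hh using Subgroup.closure_induction with
  | mem w hw =>
      obtain ⟨g, rfl⟩ := hw
      show (chiIota1 G y)⁻¹ * uu G g * chiIota1 G y ∈ chiL G
      rw [uu_conj_i]
      exact mul_mem (uu_mem _) (inv_mem (uu_mem _))
  | one => simpa using one_mem (chiL G)
  | mul a b _ _ ha hb =>
      have e : (chiIota1 G y)⁻¹ * (a * b) * chiIota1 G y =
          ((chiIota1 G y)⁻¹ * a * chiIota1 G y) * ((chiIota1 G y)⁻¹ * b * chiIota1 G y) := by
        group
      rw [e]; exact mul_mem ha hb
  | inv a _ ha =>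
      have e : (chiIota1 G y)⁻¹ * a⁻¹ * chiIota1 G y =
          ((chiIota1 G y)⁻¹ * a * chiIota1 G y)⁻¹ := by group
      rw [e]; exact inv_mem ha

lemma conjL_j (y : G) {h : Chi G} (hh : h ∈ chiL G) :
    (chiIota2 G y)⁻¹ * h * chiIota2 G y ∈ chiL G := by
  induction hh using Subgroup.closure_induction with
  | mem w hw =>
      obtain ⟨g, rfl⟩ := hw
      show (chiIota2 G y)⁻¹ * uu G g * chiIota2 G y ∈ chiL G
      rw [uu_conj_j]
      exact mul_mem (inv_mem (uu_mem _)) (uu_mem _)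
  | one => simpa using one_mem (chiL G)
  | mul a b _ _ ha hb =>
      have e : (chiIota2 G y)⁻¹ * (a * b) * chiIota2 G y =
          ((chiIota2 G y)⁻¹ * a * chiIota2 G y) * ((chiIota2 G y)⁻¹ * b * chiIota2 G y) := by
        group
      rw [e]; exact mul_mem ha hb
  | inv a _ ha =>
      have e : (chiIota2 G y)⁻¹ * a⁻¹ * chiIota2 G y =
          ((chiIota2 G y)⁻¹ * a * chiIota2 G y)⁻¹ := by group
      rw [e]; exact inv_mem ha

lemma top_gen :
    Subgroup.closure (Set.range (chiIota1 G) ∪ Set.range (chiIota2 G)) = ⊤ := by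
  rw [eq_top_iff]
  rintro z -
  obtain ⟨w, rfl⟩ := QuotientGroup.mk'_surjective (chiRel G) z
  induction w using Monoid.Coprod.induction_on with
  | inl m => exact Subgroup.subset_closure (Or.inl ⟨m, rfl⟩)
  | inr n => exact Subgroup.subset_closure (Or.inr ⟨n, rfl⟩)
  | mul a b ha hb => rw [map_mul]; exact mul_mem ha hb

lemma L_normal : (chiL G).Normal := by
  rw [← Subgroup.normalizer_eq_top_iff, eq_top_iff, ← top_gen]
  rw [Subgroup.closure_le]
  rintro q (⟨y, rfl⟩ | ⟨y, rfl⟩) <;>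
    · rw [SetLike.mem_coe, Subgroup.mem_normalizer_iff]
      intro h
      constructor
      · intro hh
        first
        | (have h1 := conjL_i y⁻¹ hh; simpa [map_inv] using h1)
        | (have h1 := conjL_j y⁻¹ hh; simpa [map_inv] using h1)
      · intro hh
        first
        | (have h1 := conjL_i y hh; simpa [mul_assoc] using h1)
        | (have h1 := conjL_j y hh; simpa [mul_assoc] using h1)

lemma L1_le_L : chiL1 G ≤ chiL G := by
  show ⁅chiL G, chiG1 G⁆ ≤ chiL G
  refine Subgroup.commutator_le.mpr fun l hl y _ => ?_
  have e : ⁅l, y⁆ = l * (y * l⁻¹ * y⁻¹) := by group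
  rw [e]
  exact mul_mem hl ((L_normal).conj_mem l⁻¹ (inv_mem hl) y)

lemma L2_le_L : chiL2 G ≤ chiL G := by
  show ⁅chiL G, chiG2 G⁆ ≤ chiL G
  refine Subgroup.commutator_le.mpr fun l hl y _ => ?_
  have e : ⁅l, y⁆ = l * (y * l⁻¹ * y⁻¹) := by group
  rw [e]
  exact mul_mem hl ((L_normal).conj_mem l⁻¹ (inv_mem hl) y)

variable (G)

/-- The projection `χ(G) → G × G`. -/
def prMap : Chi G →* G × G :=
  QuotientGroup.lift (chiRel G)
    (Monoid.Coprod.lift (MonoidHom.inl G G) (MonoidHom.inr G G)) (by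
      refine Subgroup.normalClosure_le_normal ?_
      rintro x ⟨g, rfl⟩
      simp [MonoidHom.mem_ker, Prod.ext_iff])

variable {G}

lemma pr_i (g : G) : prMap G (chiIota1 G g) = (g, 1) := by
  have e : prMap G (chiIota1 G g) =
      Monoid.Coprod.lift (MonoidHom.inl G G) (MonoidHom.inr G G) (Monoid.Coprod.inl g) := rfl
  rw [e, Monoid.Coprod.lift_apply_inl]
  rfl

lemma pr_j (g : G) : prMap G (chiIota2 G g) = (1, g) := by
  have e : prMap G (chiIota2 G g) =
      Monoid.Coprod.lift (MonoidHom.inl G G) (MonoidHom.inr G G) (Monoid.Coprod.inr g) := rfl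
  rw [e, Monoid.Coprod.lift_apply_inr]
  rfl

lemma ker_le_NN : (prMap G).ker ≤ NN G := by
  intro z hz
  have hcomm : ∀ a b : G, Commute (((QuotientGroup.mk' (NN G)).comp (chiIota1 G)) a)
      (((QuotientGroup.mk' (NN G)).comp (chiIota2 G)) b) := by
    intro a b
    have hD : ⁅chiIota1 G a, chiIota2 G b⁆ ∈ (chiD G : Set (Chi G)) :=
      Subgroup.commutator_mem_commutator ⟨a, rfl⟩ ⟨b, rfl⟩
    have h1 : (QuotientGroup.mk' (NN G)) ⁅chiIota1 G a, chiIota2 G b⁆ = 1 :=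
      (QuotientGroup.eq_one_iff _).mpr (Subgroup.subset_normalClosure hD)
    rw [map_commutatorElement] at h1
    exact commutatorElement_eq_one_iff_commute.mp h1
  set σ := MonoidHom.noncommCoprod ((QuotientGroup.mk' (NN G)).comp (chiIota1 G))
    ((QuotientGroup.mk' (NN G)).comp (chiIota2 G)) hcomm with hσdef
  have hσ : ∀ w : Chi G, σ (prMap G w) = QuotientGroup.mk' (NN G) w := by
    intro w
    obtain ⟨w, rfl⟩ := QuotientGroup.mk'_surjective (chiRel G) w
    induction w using Monoid.Coprod.induction_on with
    | inl m =>
        have : (QuotientGroup.mk' (chiRel G)) (Monoid.Coprod.inl m) = chiIota1 G m := rfl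
        rw [this, pr_i]
        simp [hσdef, MonoidHom.noncommCoprod_apply]
    | inr n =>
        have : (QuotientGroup.mk' (chiRel G)) (Monoid.Coprod.inr n) = chiIota2 G n := rfl
        rw [this, pr_j]
        simp [hσdef, MonoidHom.noncommCoprod_apply]
    | mul a b ha hb =>
        have h1 := map_mul (prMap G) (QuotientGroup.mk' (chiRel G) a) (QuotientGroup.mk' (chiRel G) b)
        have h2 := map_mul (QuotientGroup.mk' (NN G)) (QuotientGroup.mk' (chiRel G) a)
          (QuotientGroup.mk' (chiRel G) b)
        exact (congrArg σ h1).trans ((map_mul σ _ _).trans ((congrArg₂ (· * ·) ha hb).trans h2.symm))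
  have h1 : QuotientGroup.mk' (NN G) z = 1 := by
    rw [← hσ z, MonoidHom.mem_ker.mp hz, map_one]
  exact (QuotientGroup.eq_one_iff z).mp h1

lemma centralizer_L_normal : (Subgroup.centralizer (chiL G : Set (Chi G))).Normal := by
  constructor
  intro n hn g
  rw [Subgroup.mem_centralizer_iff] at hn ⊢
  intro h hh
  have hg : g⁻¹ * h * g ∈ chiL G := by
    have := (L_normal (G := G)).conj_mem h hh g⁻¹
    simpa [mul_assoc] using this
  have h2 := hn _ hg
  have h3 := congrArg (fun t => g * t * g⁻¹) h2
  simpa [mul_assoc] using h3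

lemma L_comm_dgen (x y : G) {l : Chi G} (hl : l ∈ chiL G) :
    Commute l ⁅chiIota1 G x, chiIota2 G y⁆ := by
  induction hl using Subgroup.closure_induction with
  | mem w hw =>
      obtain ⟨g, rfl⟩ := hw
      exact (dgen_comm_u x y g).symm
  | one => exact Commute.one_left _
  | mul a b _ _ ha hb => exact ha.mul_left hb
  | inv a _ ha => exact ha.inv_left

lemma D_le_centralizer : chiD G ≤ Subgroup.centralizer (chiL G : Set (Chi G)) := by
  show ⁅chiG1 G, chiG2 G⁆ ≤ _
  refine Subgroup.commutator_le.mpr ?_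
  rintro a ⟨x, rfl⟩ b ⟨y, rfl⟩
  rw [Subgroup.mem_centralizer_iff]
  intro l hl
  exact (L_comm_dgen x y hl).eq

lemma NN_le_centralizer : NN G ≤ Subgroup.centralizer (chiL G : Set (Chi G)) := by
  haveI := centralizer_L_normal (G := G)
  exact Subgroup.normalClosure_le_normal D_le_centralizer

lemma commute_of_NN {n l : Chi G} (hn : n ∈ NN G) (hl : l ∈ chiL G) : Commute n l :=
  (Subgroup.mem_centralizer_iff.mp (NN_le_centralizer hn) l hl).symm

lemma L1_snd {x : Chi G} (hx : x ∈ chiL1 G) : (prMap G x).2 = 1 := by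
  have hle : chiL1 G ≤ ((MonoidHom.snd G G).comp (prMap G)).ker := by
    show ⁅chiL G, chiG1 G⁆ ≤ _
    refine Subgroup.commutator_le.mpr ?_
    rintro l _ y ⟨g, rfl⟩
    simp [MonoidHom.mem_ker, map_commutatorElement, pr_i]
  simpa [MonoidHom.mem_ker] using hle hx

lemma L2_fst {x : Chi G} (hx : x ∈ chiL2 G) : (prMap G x).1 = 1 := by
  have hle : chiL2 G ≤ ((MonoidHom.fst G G).comp (prMap G)).ker := by
    show ⁅chiL G, chiG2 G⁆ ≤ _
    refine Subgroup.commutator_le.mpr ?_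
    rintro l _ y ⟨g, rfl⟩
    simp [MonoidHom.mem_ker, map_commutatorElement, pr_j]
  simpa [MonoidHom.mem_ker] using hle hx

lemma commutator_mem_ker {x l2 : Chi G} (hx : x ∈ chiL1 G) (hl2 : l2 ∈ chiL2 G) :
    ⁅x, l2⁆ ∈ (prMap G).ker := by
  have h1 := L1_snd hx
  have h2 := L2_fst hl2
  simp [MonoidHom.mem_ker, map_commutatorElement, commutatorElement_def, Prod.ext_iff, h1, h2]

lemma commutator_mem_NN {x l2 : Chi G} (hx : x ∈ chiL1 G) (hl2 : l2 ∈ chiL2 G) :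
    ⁅x, l2⁆ ∈ NN G :=
  ker_le_NN (commutator_mem_ker hx hl2)

lemma commutator_mem_L {x l2 : Chi G} (hx : x ∈ chiL1 G) (hl2 : l2 ∈ chiL2 G) :
    ⁅x, l2⁆ ∈ chiL G := by
  have h1 := L1_le_L hx
  have h2 := L2_le_L hl2
  rw [commutatorElement_def]
  exact mul_mem (mul_mem (mul_mem h1 h2) (inv_mem h1)) (inv_mem h2)

lemma comm_split {x x' l2 : Chi G} (hx : x ∈ chiL1 G) (hx' : x' ∈ chiL1 G)
    (hl2 : l2 ∈ chiL2 G) : ⁅x * x', l2⁆ = ⁅x', l2⁆ * ⁅x, l2⁆ := by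
  have hc : Commute ⁅x', l2⁆ x := commute_of_NN (commutator_mem_NN hx' hl2) (L1_le_L hx)
  rw [comm_mul]
  have e : x * ⁅x', l2⁆ * x⁻¹ = ⁅x', l2⁆ := by
    have := congrArg (fun t => t * x⁻¹) hc.eq.symm
    simpa [mul_assoc] using this
  rw [e]

lemma comm_pow {x l2 : Chi G} (hx : x ∈ chiL1 G) (hl2 : l2 ∈ chiL2 G) (n : ℕ) :
    ⁅x, l2⁆ ^ n = ⁅x ^ n, l2⁆ := by
  induction n with
  | zero => simp
  | succ n ih =>
      rw [pow_succ x, comm_split (pow_mem hx n) hx hl2, ← ih, pow_succ']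

lemma base_torsion (hG : ∀ x y : G, ∃ n : ℕ, 0 < n ∧ ⁅x, y⁆ ^ n = 1)
    {l : Chi G} (hl : l ∈ chiL G) (g : G) {l2 : Chi G} (hl2 : l2 ∈ chiL2 G) :
    ∃ n : ℕ, 0 < n ∧ ⁅⁅l, chiIota1 G g⁆, l2⁆ ^ n = 1 := by
  obtain ⟨n, hn, hcn⟩ := hG (prMap G l).1 g
  have hx1 : ⁅l, chiIota1 G g⁆ ∈ chiL1 G :=
    Subgroup.commutator_mem_commutator hl ⟨g, rfl⟩
  have hprx : prMap G ⁅l, chiIota1 G g⁆ = (⁅(prMap G l).1, g⁆, (1 : G)) := by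
    rw [map_commutatorElement, pr_i]
    simp [commutatorElement_def, Prod.ext_iff]
  have hker : ⁅l, chiIota1 G g⁆ ^ n ∈ (prMap G).ker := by
    rw [MonoidHom.mem_ker, map_pow, hprx]
    simp [Prod.pow_mk, Prod.ext_iff, hcn]
  refine ⟨n, hn, ?_⟩
  rw [comm_pow hx1 hl2 n]
  exact commutatorElement_eq_one_iff_commute.mpr
    (commute_of_NN (ker_le_NN hker) (L2_le_L hl2))

lemma inner_torsion (hG : ∀ x y : G, ∃ n : ℕ, 0 < n ∧ ⁅x, y⁆ ^ n = 1)
    {x l2 : Chi G} (hx : x ∈ Subgroup.closure {g | ∃ g₁ ∈ chiL G, ∃ g₂ ∈ chiG1 G, ⁅g₁, g₂⁆ = g})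
    (hl2 : l2 ∈ chiL2 G) :
    ∃ n : ℕ, 0 < n ∧ ⁅x, l2⁆ ^ n = 1 := by
  induction hx using Subgroup.closure_induction with
  | mem w hw =>
      obtain ⟨p, hp, q, hq, rfl⟩ := hw
      obtain ⟨g, rfl⟩ := hq
      exact base_torsion hG hp g hl2
  | one => exact ⟨1, one_pos, by simp⟩
  | mul a b ha hb iha ihb =>
      obtain ⟨n, hn, he⟩ := iha
      obtain ⟨m, hm, he'⟩ := ihb
      have haL1 : a ∈ chiL1 G := ha
      have hbL1 : b ∈ chiL1 G := hb
      refine ⟨n * m, Nat.mul_pos hn hm, ?_⟩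
      rw [comm_split haL1 hbL1 hl2]
      have hcomm : Commute ⁅b, l2⁆ ⁅a, l2⁆ :=
        commute_of_NN (commutator_mem_NN hbL1 hl2) (commutator_mem_L haL1 hl2)
      rw [hcomm.mul_pow]
      have e1 : ⁅b, l2⁆ ^ (n * m) = 1 := by rw [Nat.mul_comm, pow_mul, he', one_pow]
      have e2 : ⁅a, l2⁆ ^ (n * m) = 1 := by rw [pow_mul, he, one_pow]
      rw [e1, e2, one_mul]
  | inv a ha iha =>
      obtain ⟨n, hn, he⟩ := iha
      have haL1 : a ∈ chiL1 G := ha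
      have hinv : ⁅a⁻¹, l2⁆ = ⁅a, l2⁆⁻¹ := by
        have h0 := comm_split haL1 (inv_mem haL1) hl2
        rw [mul_inv_cancel, commutatorElement_one_left] at h0
        exact (eq_inv_of_mul_eq_one_left h0.symm)
      exact ⟨n, hn, by rw [hinv, inv_pow, he, inv_one]⟩

end ChiAux

theorem chiL12_periodic_of_commutators_torsion (G : Type*) [Group G]
    (hG : ∀ x y : G, ∃ n : ℕ, 0 < n ∧ ⁅x, y⁆ ^ n = 1) :
    ∀ z ∈ chiL12 G, ∃ n : ℕ, 0 < n ∧ z ^ n = 1 := by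
  intro z hz
  have hz' : z ∈ Subgroup.closure {g | ∃ g₁ ∈ chiL1 G, ∃ g₂ ∈ chiL2 G, ⁅g₁, g₂⁆ = g} := hz
  clear hz
  have main : z ∈ ChiAux.NN G ∧ z ∈ chiL G ∧ ∃ n : ℕ, 0 < n ∧ z ^ n = 1 := by
    induction hz' using Subgroup.closure_induction with
    | mem w hw =>
        obtain ⟨x, hx, l2, hl2, rfl⟩ := hw
        exact ⟨ChiAux.commutator_mem_NN hx hl2, ChiAux.commutator_mem_L hx hl2,
          ChiAux.inner_torsion hG hx hl2⟩
    | one => exact ⟨one_mem _, one_mem _, 1, one_pos, one_pow 1⟩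
    | mul a b _ _ iha ihb =>
        obtain ⟨haN, haL, n, hn, he⟩ := iha
        obtain ⟨hbN, hbL, m, hm, he'⟩ := ihb
        refine ⟨mul_mem haN hbN, mul_mem haL hbL, n * m, Nat.mul_pos hn hm, ?_⟩
        have hcomm : Commute a b := ChiAux.commute_of_NN haN hbL
        rw [hcomm.mul_pow]
        have e2 : a ^ (n * m) = 1 := by rw [pow_mul, he, one_pow]
        have e1 : b ^ (n * m) = 1 := by rw [Nat.mul_comm, pow_mul, he', one_pow]
        rw [e1, e2, one_mul]
    | inv a _ iha =>
        obtain ⟨haN, haL, n, hn, he⟩ := iha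
        exact ⟨inv_mem haN, inv_mem haL, n, hn, by rw [inv_pow, he, inv_one]⟩
  exact main.2.2
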